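/- Let C be a cycle of length L >= N+1 in a graph G, and suppose N agents occupy distinct vertices of C. Then there exists a new injective assignment of agents to vertices of C such that each agent is either at its original vertex or at the successor of its original vertex along C, and at least one agent whose successor vertex was unoccupied has moved to that successor. -/

import Mathlib

/-- Let C be a cycle of length L ≥ N+1 in a graph G, and suppose
N agents occupy distinct vertices of C. Then there exists a new injective
assignment of agents to vertices of C such that each agent is either at its
original vertex or at the successor of its original vertex along C, and at
least one agent whose successor vertex was unoccupied has moved to that
successor. -/
theorem cycle_advance_exists
    {V : Type*} (G : SimpleGraph V) (N L : ℕ) [NeZero L]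
    (hN : 1 ≤ N) (hL : N + 1 ≤ L)
    (c : Fin L → V) (hc : Function.Injective c)
    (hadj : ∀ k : Fin L, G.Adj (c k) (c (k + 1)))
    (f : Fin N → V) (hf : Function.Injective f)
    (hocc : ∀ i : Fin N, ∃ k : Fin L, f i = c k) :
    ∃ g : Fin N → V, Function.Injective g ∧
      (∀ i : Fin N, ∃ k : Fin L, f i = c k ∧ (g i = c k ∨ g i = c (k + 1))) ∧
      (∃ i : Fin N, ∃ k : Fin L, f i = c k ∧ (∀ j : Fin N, f j ≠ c (k + 1)) ∧
        g i = c (k + 1)) := by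
  classical
  set S : Finset (Fin L) := Finset.univ.filter (fun k => ∃ i, f i = c k) with hS
  have hmemS : ∀ k : Fin L, k ∈ S ↔ ∃ i, f i = c k := by
    intro k; simp [hS]
  -- S has small cardinality
  have hcard : S.card ≤ N := by
    have : ∀ k ∈ S, ∃ i : Fin N, f i = c k := fun k hk => (hmemS k).mp hk
    choose φ hφ using this
    have hinj : Function.Injective (fun x : S => φ x.1 x.2) := by
      intro a b hab
      have : c a.1 = c b.1 := by
        rw [← hφ a.1 a.2, ← hφ b.1 b.2]
        exact congrArg f hab
      exact Subtype.ext (hc this)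
    have := Fintype.card_le_of_injective _ hinj
    simpa using this
  -- find occupied k with k+1 unoccupied
  have hex : ∃ k : Fin L, k ∈ S ∧ k + 1 ∉ S := by
    by_contra h
    push_neg at h
    have hclosed : ∀ k ∈ S, k + 1 ∈ S := h
    obtain ⟨k0, hk0⟩ : ∃ k : Fin L, k ∈ S := by
      obtain ⟨i0⟩ : Nonempty (Fin N) := ⟨⟨0, hN⟩⟩
      obtain ⟨k, hk⟩ := hocc i0
      exact ⟨k, (hmemS k).mpr ⟨i0, hk⟩⟩
    open Fin.NatCast in
    have hall : ∀ n : ℕ, k0 + (n : Fin L) ∈ S := by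
      intro n
      induction n with
      | zero => simpa using hk0
      | succ m ih =>
        have : ((m + 1 : ℕ) : Fin L) = (m : Fin L) + 1 := by push_cast; ring
        rw [this, ← add_assoc]
        exact hclosed _ ih
    have hS_univ : S = Finset.univ := by
      apply Finset.eq_univ_of_forall
      intro m
      have := hall ((m - k0 : Fin L) : Fin L).val
      rwa [Fin.cast_val_eq_self, add_sub_cancel] at this
    have : L ≤ N := by
      have := hcard
      rw [hS_univ] at this
      simpa using this
    omega
  obtain ⟨k, hkS, hk1⟩ := hex
  obtain ⟨i0, hi0⟩ := (hmemS k).mp hkS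
  have hunocc : ∀ j : Fin N, f j ≠ c (k + 1) := by
    intro j hj
    exact hk1 ((hmemS (k + 1)).mpr ⟨j, hj⟩)
  refine ⟨fun j => if j = i0 then c (k + 1) else f j, ?_, ?_, ?_⟩
  · intro a b hab
    dsimp only at hab
    by_cases ha : a = i0 <;> by_cases hb : b = i0
    · rw [ha, hb]
    · rw [if_pos ha, if_neg hb] at hab
      exact absurd hab.symm (hunocc b)
    · rw [if_neg ha, if_pos hb] at hab
      exact absurd hab (hunocc a)
    · rw [if_neg ha, if_neg hb] at hab
      exact hf hab
  · intro i
    by_cases hi : i = i0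
    · exact ⟨k, hi ▸ hi0, Or.inr (by simp [hi])⟩
    · obtain ⟨k', hk'⟩ := hocc i
      exact ⟨k', hk', Or.inl (by simp [hi, hk'])⟩
  · exact ⟨i0, k, hi0, hunocc, by simp⟩
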